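/- Let δt, δx > 0, let u : ℤ → ℝ and s : ℤ → ℝ be arbitrary and let δu, w* : ℤ → ℝ be finitely supported. Define δv : ℤ → ℝ (the linearized conservative Burgers scheme applied to δu) by δv_i := δu_i − (δt/δx)[ s_i (u_i δu_i − u_{i−1} δu_{i−1}) + (1 − s_{i+1})(u_{i+1} δu_{i+1} − u_i δu_i) ], and define w : ℤ → ℝ (the discrete adjoint step applied to w*) by w_i := w*_i − (δt/δx) u_i ( w*_i s_i − w*_{i+1} s_{i+1} + w*_{i−1} (1 − s_i) − w*_i (1 − s_{i+1}) ). Then the discrete duality identity holds: Σ_{i∈ℤ} w*_i δv_i = Σ_{i∈ℤ} w_i δu_i. -/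

import Mathlib

open Function

private lemma finsum_shift_up (f : ℤ → ℝ) : ∑ᶠ i : ℤ, f (i + 1) = ∑ᶠ i : ℤ, f i :=
  finsum_comp_equiv (Equiv.addRight (1 : ℤ))

private lemma finsum_shift_down (f : ℤ → ℝ) : ∑ᶠ i : ℤ, f (i - 1) = ∑ᶠ i : ℤ, f i :=
  finsum_comp_equiv (Equiv.subRight (1 : ℤ))

private lemma telescope_up (f : ℤ → ℝ) (hf : (support f).Finite) :
    ∑ᶠ i : ℤ, (f (i + 1) - f i) = 0 := by
  have h1 : (support fun i : ℤ => f (i + 1)).Finite := by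
    apply Set.Finite.preimage _ hf
    exact Function.Injective.injOn (fun a b h => by simpa using h)
  rw [finsum_sub_distrib h1 hf, finsum_shift_up, sub_self]

private lemma telescope_down (f : ℤ → ℝ) (hf : (support f).Finite) :
    ∑ᶠ i : ℤ, (f (i - 1) - f i) = 0 := by
  have h1 : (support fun i : ℤ => f (i - 1)).Finite := by
    apply Set.Finite.preimage _ hf
    exact Function.Injective.injOn (fun a b h => by simpa using h)
  rw [finsum_sub_distrib h1 hf, finsum_shift_down, sub_self]

/-- One-step adjoint duality for the conservative upwind scheme for Burgers' equation:
if `δv` is the linearized forward step applied to `δu` and `w` is the discrete adjoint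
step applied to `w*`, then `⟨w*, δv⟩ = ⟨w, δu⟩`. -/
theorem discrete_adjoint_duality (δt δx : ℝ) (hδt : δt > 0) (hδx : δx > 0)
    (u s : ℤ → ℝ) (δu wstar : ℤ → ℝ)
    (hδu : (Function.support δu).Finite) (hw : (Function.support wstar).Finite) :
    (∑ᶠ i : ℤ, wstar i *
        (δu i - (δt / δx) * (s i * (u i * δu i - u (i - 1) * δu (i - 1))
          + (1 - s (i + 1)) * (u (i + 1) * δu (i + 1) - u i * δu i))))
      = ∑ᶠ i : ℤ, (wstar i - (δt / δx) * u i *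
          (wstar i * s i - wstar (i + 1) * s (i + 1)
            + wstar (i - 1) * (1 - s i) - wstar i * (1 - s (i + 1)))) * δu i := by
  set c := δt / δx with hc
  -- P i and Q i : the cross terms
  set P : ℤ → ℝ := fun i => wstar (i + 1) * s (i + 1) * u i * δu i with hP
  set Q : ℤ → ℝ := fun i => wstar (i - 1) * (1 - s i) * u i * δu i with hQ
  have hPfin : (support P).Finite := by
    apply hδu.subset
    intro i hi
    simp only [hP, mem_support, ne_eq] at hi ⊢
    intro h; apply hi; simp [h]
  have hQfin : (support Q).Finite := by
    apply hδu.subset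
    intro i hi
    simp only [hQ, mem_support, ne_eq] at hi ⊢
    intro h; apply hi; simp [h]
  -- pointwise identity
  have key : ∀ i : ℤ, wstar i *
        (δu i - c * (s i * (u i * δu i - u (i - 1) * δu (i - 1))
          + (1 - s (i + 1)) * (u (i + 1) * δu (i + 1) - u i * δu i)))
      = (wstar i - c * u i *
          (wstar i * s i - wstar (i + 1) * s (i + 1)
            + wstar (i - 1) * (1 - s i) - wstar i * (1 - s (i + 1)))) * δu i
        + c * (P (i - 1) - P i) + c * (Q i - Q (i + 1)) := by
    intro i
    simp only [hP, hQ]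
    have : i - 1 + 1 = i := by ring
    rw [this]
    have : i + 1 - 1 = i := by ring
    rw [this]
    ring
  rw [finsum_congr key]
  have hRfin : (support fun i : ℤ => (wstar i - c * u i *
          (wstar i * s i - wstar (i + 1) * s (i + 1)
            + wstar (i - 1) * (1 - s i) - wstar i * (1 - s (i + 1)))) * δu i).Finite := by
    apply hδu.subset
    intro i hi
    simp only [mem_support, ne_eq] at hi ⊢
    intro h; apply hi; simp [h]
  have hPsub : (support fun i : ℤ => P (i - 1) - P i).Finite := by
    apply Set.Finite.subset (Set.Finite.union (hPfin.preimage
      (Function.Injective.injOn (sub_left_injective : Function.Injective (fun i : ℤ => i - 1)))) hPfin)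
    intro i hi
    simp only [mem_support, ne_eq, Set.mem_union, Set.mem_preimage] at hi ⊢
    by_contra hcon
    push_neg at hcon
    apply hi
    simp [hcon.1, hcon.2]
  have hQsub : (support fun i : ℤ => Q i - Q (i + 1)).Finite := by
    apply Set.Finite.subset (Set.Finite.union hQfin (hQfin.preimage
      (Function.Injective.injOn (add_left_injective 1 : Function.Injective (fun i : ℤ => i + 1)))))
    intro i hi
    simp only [mem_support, ne_eq, Set.mem_union, Set.mem_preimage] at hi ⊢
    by_contra hcon
    push_neg at hcon
    apply hi
    simp [hcon.1, hcon.2]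
  have hP2 : (support fun i : ℤ => c * (P (i - 1) - P i)).Finite := by
    apply hPsub.subset
    intro i hi
    simp only [mem_support, ne_eq] at hi ⊢
    intro h; apply hi; rw [h, mul_zero]
  have hQ2 : (support fun i : ℤ => c * (Q i - Q (i + 1))).Finite := by
    apply hQsub.subset
    intro i hi
    simp only [mem_support, ne_eq] at hi ⊢
    intro h; apply hi; rw [h, mul_zero]
  rw [finsum_add_distrib ((hRfin.union hP2).subset (Function.support_add _ _)) hQ2,
      finsum_add_distrib hRfin hP2]
  have e1 : ∑ᶠ i : ℤ, c * (P (i - 1) - P i) = 0 := by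
    rw [← mul_finsum _ c, telescope_down P hPfin, mul_zero]
  have e2 : ∑ᶠ i : ℤ, c * (Q i - Q (i + 1)) = 0 := by
    have : ∑ᶠ i : ℤ, (Q i - Q (i + 1)) = 0 := by
      have h := telescope_up Q hQfin
      calc ∑ᶠ i : ℤ, (Q i - Q (i + 1)) = ∑ᶠ i : ℤ, -(Q (i + 1) - Q i) := by
            apply finsum_congr; intro i; ring
        _ = 0 := by
            rw [finsum_neg_distrib, h, neg_zero]
    rw [← mul_finsum _ c, this, mul_zero]
  rw [e1, e2, add_zero, add_zero]
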